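/- Suppose positive integers x1,...,x7, y1,...,y7 satisfy the E7-frieze equations x1*y1 = x4+1, x2*y2 = x3+1, x3*y3 = x2+x4, x4*y4 = x1*x3+x5, x5*y5 = x4+x6, x6*y6 = x5+x7, x7*y7 = x6+1, with y7 = 1. Then y6 ≥ 2, and the tuple (x1,...,x6, y1,...,y5, y6 - 1) satisfies the E6-frieze equations x1*y1 = x4+1, x2*y2 = x3+1, x3*y3 = x2+x4, x4*y4 = x1*x3+x5, x5*y5 = x4+x6, x6*y6' = x5+1 (with x7 = x6 + 1 determined). -/
import Mathlib

theorem stmt14 (x1 x2 x3 x4 x5 x6 x7 y1 y2 y3 y4 y5 y6 y7 : ℕ)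
    (hx : 0 < x1 ∧ 0 < x2 ∧ 0 < x3 ∧ 0 < x4 ∧ 0 < x5 ∧ 0 < x6 ∧ 0 < x7)
    (hy : 0 < y1 ∧ 0 < y2 ∧ 0 < y3 ∧ 0 < y4 ∧ 0 < y5 ∧ 0 < y6 ∧ 0 < y7)
    (h1 : x1 * y1 = x4 + 1) (h2 : x2 * y2 = x3 + 1) (h3 : x3 * y3 = x2 + x4)
    (h4 : x4 * y4 = x1 * x3 + x5) (h5 : x5 * y5 = x4 + x6) (h6 : x6 * y6 = x5 + x7)
    (h7 : x7 * y7 = x6 + 1) (hy7 : y7 = 1) :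
    2 ≤ y6 ∧
    x1 * y1 = x4 + 1 ∧ x2 * y2 = x3 + 1 ∧ x3 * y3 = x2 + x4 ∧
    x4 * y4 = x1 * x3 + x5 ∧ x5 * y5 = x4 + x6 ∧
    x6 * (y6 - 1) = x5 + 1 ∧ x7 = x6 + 1 := by
  subst hy7
  simp only [mul_one] at h7
  obtain ⟨_, _, _, _, hx5, hx6, _⟩ := hx
  have hy6 : 2 ≤ y6 := by
    by_contra h
    interval_cases y6 <;> omega
  refine ⟨hy6, h1, h2, h3, h4, h5, ?_, h7⟩
  have : x6 * (y6 - 1) = x6 * y6 - x6 := by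
    rw [Nat.mul_sub_one]
  omega
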